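/- arXiv:2412.07475 — 4 statements merged into one kernel-verified Lean document; each statement's English description precedes it below -/
import Mathlib

section
/- Let 𝒮 and 𝒯 be limit sketches and let C be a category admitting, for every small category J that indexes a designated cone of 𝒮 or of 𝒯, all limits of shape J. Then the currying isomorphism between functor categories Fun(S, Fun(T, C)) ≅ Fun(T, Fun(S, C)) restricts to an isomorphism of categories Mod(𝒮, Mod(𝒯, C)) ≅ Mod(𝒯, Mod(𝒮, C)), where on each side 'model' means a functor carrying every designated cone of the sketch to a limit cone in the indicated category of models. (Strict, Set-enriched instance of the paper's symmetry-of-internalisation theorem.) -/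
open CategoryTheory CategoryTheory.Limits

structure SketchCone.{s, a, b} (S : Type a) [Category.{b} S] :
    Type (max a b (s + 1)) where
  J : Type s
  [instJ : SmallCategory J]
  D : J ⥤ S
  cone : Limits.Cone D

attribute [instance] SketchCone.instJ

structure Sketch.{s} : Type (s + 1) where
  S : Type s
  [inst : SmallCategory S]
  cones : Set (SketchCone.{s, s, s} S)

attribute [instance] Sketch.inst

universe u v w

def IsModel (𝒮 : Sketch.{u}) (C : Type v) [Category.{w} C] (F : 𝒮.S ⥤ C) : Prop :=
  ∀ c ∈ 𝒮.cones, Nonempty (Limits.IsLimit (F.mapCone c.cone))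

abbrev ModelsCat (𝒮 : Sketch.{u}) (C : Type v) [Category.{w} C] :=
  ObjectProperty.FullSubcategory (IsModel 𝒮 C)

def modForget (𝒮 𝒯 : Sketch.{u}) (C : Type v) [Category.{w} C] :
    ModelsCat 𝒮 (ModelsCat 𝒯 C) ⥤ 𝒮.S ⥤ 𝒯.S ⥤ C :=
  ObjectProperty.ι (IsModel 𝒮 (ModelsCat 𝒯 C)) ⋙
    (Functor.whiskeringRight 𝒮.S (ModelsCat 𝒯 C) (𝒯.S ⥤ C)).obj (ObjectProperty.ι (IsModel 𝒯 C))

def flipFunctor' (A : Type*) [Category A] (B : Type*) [Category B] (E : Type*) [Category E] :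
    (A ⥤ B ⥤ E) ⥤ B ⥤ A ⥤ E where
  obj F := F.flip
  map α :=
    { app := fun b =>
        { app := fun a => (α.app a).app b
          naturality := fun _ _ f => congrArg (fun t => NatTrans.app t b) (α.naturality f) } }

section Aux

variable {T : Type*} [Category T] {C : Type*} [Category C]

/-- Limits commute with limits, cone version: if `c` is a pointwise limit cone of functors
`T ⥤ C`, and each functor in the diagram sends the cone `e` to a limit cone, then so does the
cone point of `c`. -/
noncomputable def isLimitMapConeOfPointwise {J : Type*} [Category J]
    {K : J ⥤ T ⥤ C} {c : Cone K}
    (hc : ∀ t : T, IsLimit (((evaluation T C).obj t).mapCone c))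
    {J' : Type*} [Category J'] {D : J' ⥤ T} (e : Cone D)
    (hK : ∀ j, Nonempty (IsLimit ((K.obj j).mapCone e))) :
    IsLimit (c.pt.mapCone e) := by
  have hKj : ∀ j, IsLimit ((K.obj j).mapCone e) := fun j => (hK j).some
  -- auxiliary cone over `D ⋙ K.obj j` associated to a cone `s` over `D ⋙ c.pt`
  let sj : ∀ (s : Cone (D ⋙ c.pt)) (j : J), Cone (D ⋙ K.obj j) := fun s j =>
    (Cones.postcompose (Functor.whiskerLeft D (c.π.app j))).obj s
  let f : ∀ (s : Cone (D ⋙ c.pt)) (j : J), s.pt ⟶ (K.obj j).obj e.pt := fun s j =>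
    (hKj j).lift (sj s j)
  have hf : ∀ (s : Cone (D ⋙ c.pt)) (j : J) (k : J'),
      f s j ≫ (K.obj j).map (e.π.app k) = s.π.app k ≫ (c.π.app j).app (D.obj k) := fun s j k =>
    (hKj j).fac (sj s j) k
  -- the cone over `K ⋙ evaluation e.pt`
  let q : ∀ (s : Cone (D ⋙ c.pt)), Cone (K ⋙ (evaluation T C).obj e.pt) := fun s =>
    { pt := s.pt
      π :=
        { app := f s
          naturality := by
            intro j j' φ
            dsimp
            rw [Category.id_comp]
            refine (hKj j').hom_ext fun k => ?_
            refine ((hKj j').fac (sj s j') k).trans ?_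
            dsimp [sj]
            rw [Category.assoc, ← NatTrans.naturality, ← Category.assoc, hf s j k,
              Category.assoc, ← NatTrans.comp_app, c.w φ]; rfl } }
  refine
    { lift := fun s => (hc e.pt).lift (q s)
      fac := fun s k => ?_
      uniq := fun s m hm => ?_ }
  · refine (hc (D.obj k)).hom_ext fun j => ?_
    have h1 : (hc e.pt).lift (q s) ≫ (c.π.app j).app e.pt = f s j := (hc e.pt).fac (q s) j
    have hnat := (c.π.app j).naturality (e.π.app k)
    dsimp at hnat ⊢
    rw [Category.assoc, hnat, ← Category.assoc, h1, hf s j k]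
  · refine (hc e.pt).hom_ext fun j => ?_
    have h1 : (hc e.pt).lift (q s) ≫ (c.π.app j).app e.pt = f s j := (hc e.pt).fac (q s) j
    dsimp
    rw [h1]
    refine (hKj j).hom_ext fun k => ?_
    refine Eq.trans ?_ ((hKj j).fac (sj s j) k).symm
    have hnat := (c.π.app j).naturality (e.π.app k)
    have hm' := hm k
    dsimp [sj] at hnat hm' ⊢
    rw [Category.assoc, ← hnat, ← Category.assoc, hm']; rfl

end Aux

lemma closedUnderLimits_isModel (𝒯 : Sketch.{u}) (C : Type v) [Category.{w} C]
    (J : Type u') [Category.{v'} J] [HasLimitsOfShape J C] :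
    ObjectProperty.IsClosedUnderLimitsOfShape (IsModel 𝒯 C) J := by
  refine ⟨?_⟩
  intro X ⟨h⟩ d hd
  exact ⟨isLimitMapConeOfPointwise (c := Cone.mk _ h.π)
    (fun t => isLimitOfPreserves ((evaluation _ _).obj t) h.isLimit) d.cone
    (fun j => h.prop_diag_obj j d hd)⟩

noncomputable def isLimitEvalOfIsLimitModels (𝒯 : Sketch.{u}) {C : Type v} [Category.{w} C]
    {J : Type u'} [Category.{v'} J] [HasLimitsOfShape J C]
    {K : J ⥤ ModelsCat 𝒯 C} {c : Cone K} (hc : IsLimit c) (t : 𝒯.S) :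
    IsLimit (((evaluation 𝒯.S C).obj t).mapCone
      ((ObjectProperty.ι (IsModel 𝒯 C)).mapCone c)) := by
  haveI : CreatesLimitsOfShape J (ObjectProperty.ι (IsModel 𝒯 C)) :=
    haveI := closedUnderLimits_isModel 𝒯 C J; inferInstance
  exact isLimitOfPreserves _ (isLimitOfPreserves _ hc)

noncomputable def isLimitModelsOfPointwise (𝒯 : Sketch.{u}) {C : Type v} [Category.{w} C]
    {J : Type u'} [Category.{v'} J]
    {K : J ⥤ ModelsCat 𝒯 C} {c : Cone K}
    (h : ∀ t, IsLimit (((evaluation 𝒯.S C).obj t).mapCone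
      ((ObjectProperty.ι (IsModel 𝒯 C)).mapCone c))) : IsLimit c :=
  isLimitOfReflects (ObjectProperty.ι (IsModel 𝒯 C))
    (evaluationJointlyReflectsLimits _ h)

section Main

variable (𝒮 𝒯 : Sketch.{u}) (C : Type v) [Category.{w} C]

def flipModelsObj (hS : ∀ c ∈ 𝒮.cones, Limits.HasLimitsOfShape c.J C)
    (hT : ∀ c ∈ 𝒯.cones, Limits.HasLimitsOfShape c.J C)
    (F : ModelsCat 𝒮 (ModelsCat 𝒯 C)) : ModelsCat 𝒯 (ModelsCat 𝒮 C) where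
  obj :=
    { obj := fun t =>
        ⟨((modForget 𝒮 𝒯 C).obj F).flip.obj t, by
          intro c hc
          haveI := hS c hc
          obtain ⟨hl⟩ := F.property c hc
          exact ⟨isLimitEvalOfIsLimitModels 𝒯 hl t⟩⟩
      map := fun φ => ⟨((modForget 𝒮 𝒯 C).obj F).flip.map φ⟩
      map_id := fun t => by ext1; exact ((modForget 𝒮 𝒯 C).obj F).flip.map_id t
      map_comp := fun φ ψ => by ext1; exact ((modForget 𝒮 𝒯 C).obj F).flip.map_comp φ ψ }
  property := by
    intro d hd
    haveI := hT d hd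
    refine ⟨isLimitModelsOfPointwise 𝒮 fun s => ?_⟩
    exact ((F.obj.obj s).property d hd).some

def flipModelsFunctor (hS : ∀ c ∈ 𝒮.cones, Limits.HasLimitsOfShape c.J C)
    (hT : ∀ c ∈ 𝒯.cones, Limits.HasLimitsOfShape c.J C) :
    ModelsCat 𝒮 (ModelsCat 𝒯 C) ⥤ ModelsCat 𝒯 (ModelsCat 𝒮 C) where
  obj F := flipModelsObj 𝒮 𝒯 C hS hT F
  map {F F'} α :=
    ⟨{ app := fun t => ⟨((flipFunctor' 𝒮.S 𝒯.S C).map ((modForget 𝒮 𝒯 C).map α)).app t⟩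
       naturality := fun t t' φ => by
        ext1; exact ((flipFunctor' 𝒮.S 𝒯.S C).map ((modForget 𝒮 𝒯 C).map α)).naturality φ }⟩
  map_id := by intro F; rfl
  map_comp := by intro F F' F'' α β; rfl

end Main

theorem stmt0 (𝒮 𝒯 : Sketch.{u}) (C : Type v) [Category.{w} C]
    (hS : ∀ c ∈ 𝒮.cones, Limits.HasLimitsOfShape c.J C)
    (hT : ∀ c ∈ 𝒯.cones, Limits.HasLimitsOfShape c.J C) :
    ∃ (Φ : ModelsCat 𝒮 (ModelsCat 𝒯 C) ⥤ ModelsCat 𝒯 (ModelsCat 𝒮 C))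
      (Ψ : ModelsCat 𝒯 (ModelsCat 𝒮 C) ⥤ ModelsCat 𝒮 (ModelsCat 𝒯 C)),
      Φ ⋙ Ψ = 𝟭 (ModelsCat 𝒮 (ModelsCat 𝒯 C)) ∧
      Ψ ⋙ Φ = 𝟭 (ModelsCat 𝒯 (ModelsCat 𝒮 C)) ∧
      modForget 𝒮 𝒯 C ⋙ flipFunctor' 𝒮.S 𝒯.S C = Φ ⋙ modForget 𝒯 𝒮 C := by
  refine ⟨flipModelsFunctor 𝒮 𝒯 C hS hT, flipModelsFunctor 𝒯 𝒮 C hT hS, ?_, ?_, ?_⟩ <;> rfl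
end

section
/- Let 𝒮 and 𝒯 be limit sketches and let C be a category admitting, for every small category J that indexes a designated cone of 𝒮 or of 𝒯, all limits of shape J. Then a functor F : S × T ⥤ C is a model of the tensor product sketch 𝒮 ⊠ 𝒯 if and only if F(−, t) is a model of 𝒮 for every object t of T and F(s, −) is a model of 𝒯 for every object s of S, and the currying isomorphism Fun(S × T, C) ≅ Fun(S, Fun(T, C)) restricts to an isomorphism of categories Mod(𝒮 ⊠ 𝒯, C) ≅ Mod(𝒮, Mod(𝒯, C)). -/
open CategoryTheory CategoryTheory.Limits

universe u v w

/-- Transport a designated-cone datum along a functor. -/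
def SketchCone.map {S : Type a} [Category.{b} S] {C : Type a'} [Category.{b'} C]
    (c : SketchCone.{s} S) (F : S ⥤ C) : SketchCone.{s} C where
  J := c.J
  D := c.D ⋙ F
  cone := F.mapCone c.cone

/-- The tensor product of limit sketches.  Its underlying category is `S × T`, and its
designated cones are: for each designated cone `(J, D, X, γ)` of `𝒮` and each object `t` of
`T`, the cone over `(D, Δt) : J ⥤ S × T` with apex `(X, t)` and legs `(γ_j, 1_t)` (that is,
the image of the cone under the functor `sectL S t : S ⥤ S × T`); together with the
analogous cones obtained from the designated cones of `𝒯` and objects of `S`. -/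
def Sketch.tensor (𝒮 𝒯 : Sketch.{u}) : Sketch.{u} where
  S := 𝒮.S × 𝒯.S
  cones :=
    (⋃ t : 𝒯.S, (fun c => SketchCone.map c (Prod.sectL 𝒮.S t)) '' 𝒮.cones) ∪
    (⋃ s : 𝒮.S, (fun c => SketchCone.map c (Prod.sectR s 𝒯.S)) '' 𝒯.cones)

namespace StmtAux

universe u₁ v₁ u₂ v₂ u₃ v₃

lemma FullSubcategory.ext' {C : Type u₁} [Category.{v₁} C] {P : C → Prop}
    {X Y : ObjectProperty.FullSubcategory P} (h : X.obj = Y.obj) : X = Y := by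
  cases X; cases Y; cases h; rfl

lemma cancel_right {A : Type u₁} [Category.{v₁} A] {D : Type u₂} [Category.{v₂} D]
    {E : Type u₃} [Category.{v₃} E] {K : D ⥤ E} [K.Faithful]
    (hobj : Function.Injective K.obj)
    {F G : A ⥤ D} (h : F ⋙ K = G ⋙ K) : F = G := by
  refine CategoryTheory.Functor.ext (fun X => hobj (CategoryTheory.Functor.congr_obj h X)) ?_
  intro X Y f
  apply K.map_injective
  have h2 := CategoryTheory.Functor.congr_hom h f
  simp only [Functor.comp_map] at h2
  rw [h2]
  simp [eqToHom_map]

lemma liftExt {A : Type u₁} [Category.{v₁} A] {D : Type u₂} [Category.{v₂} D]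
    {P : D → Prop} {F G : A ⥤ ObjectProperty.FullSubcategory P}
    (h : F ⋙ ObjectProperty.ι P = G ⋙ ObjectProperty.ι P) : F = G :=
  cancel_right (fun _ _ hh => FullSubcategory.ext' hh) h

lemma curry_comp_uncurry (B : Type u₁) [Category.{v₁} B] (C : Type u₂) [Category.{v₂} C]
    (E : Type u₃) [Category.{v₃} E] :
    (Functor.curry : (B × C ⥤ E) ⥤ _) ⋙ Functor.uncurry = 𝟭 (B × C ⥤ E) := by
  refine CategoryTheory.Functor.ext (fun F => Functor.uncurry_obj_curry_obj F) ?_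
  intro F G α
  apply NatTrans.ext
  funext st
  simp [eqToHom_app]

lemma uncurry_comp_curry (B : Type u₁) [Category.{v₁} B] (C : Type u₂) [Category.{v₂} C]
    (E : Type u₃) [Category.{v₃} E] :
    (Functor.uncurry : (B ⥤ C ⥤ E) ⥤ _) ⋙ Functor.curry = 𝟭 (B ⥤ C ⥤ E) := by
  refine CategoryTheory.Functor.ext (fun F => Functor.curry_obj_uncurry_obj F) ?_
  intro F G α
  apply NatTrans.ext
  funext s
  apply NatTrans.ext
  funext t
  simp [eqToHom_app]

lemma sectR_uncurry {A : Type u₁} [Category.{v₁} A] {B : Type u₂} [Category.{v₂} B]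
    {E : Type u₃} [Category.{v₃} E] (H : A ⥤ B ⥤ E) (s : A) :
    Prod.sectR s B ⋙ Functor.uncurry.obj H = H.obj s := by
  refine CategoryTheory.Functor.ext (fun t => rfl) ?_
  intro X Y g
  simp [Functor.uncurry, Prod.sectR]
  exact (Category.id_comp _).symm

lemma sectL_uncurry {A : Type u₁} [Category.{v₁} A] {B : Type u₂} [Category.{v₂} B]
    {E : Type u₃} [Category.{v₃} E] (H : A ⥤ B ⥤ E) (t : B) :
    Prod.sectL A t ⋙ Functor.uncurry.obj H = H.flip.obj t := by
  refine CategoryTheory.Functor.ext (fun s => rfl) ?_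
  intro X Y f
  simp [Functor.uncurry, Prod.sectL]
  exact (Category.id_comp _).symm



lemma closed (𝒯 : Sketch.{u}) (C : Type v) [Category.{w} C]
    (J : Type u) [SmallCategory J] [HasLimitsOfShape J C] :
    ObjectProperty.IsClosedUnderLimitsOfShape (IsModel 𝒯 C) J := by
  refine ⟨fun _ ⟨p⟩ => ?_⟩
  let K := p.diag
  let σ : Cone K := Cone.mk _ p.π
  have hσ : IsLimit σ := p.isLimit
  have hK : ∀ j, IsModel 𝒯 C (K.obj j) := p.prop_diag_obj
  show IsModel 𝒯 C σ.pt
  intro d hd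
  have hKd : ∀ j : J, IsLimit (((evaluation J C).obj j).mapCone (K.flip.mapCone d.cone)) :=
    fun j => (hK j d hd).some
  have hflip : IsLimit (K.flip.mapCone d.cone) :=
    evaluationJointlyReflectsLimits _ hKd
  have hlim : IsLimit ((lim (J := J) (C := C)).mapCone (K.flip.mapCone d.cone)) :=
    isLimitOfPreserves lim hflip
  let e : σ.pt ≅ K.flip ⋙ lim :=
    hσ.conePointUniqueUpToIso (limit.isLimit K) ≪≫ limitIsoFlipCompLim K
  exact ⟨IsLimit.mapConeEquiv e.symm
    (hlim : IsLimit ((K.flip ⋙ lim).mapCone d.cone))⟩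

lemma part1 (𝒮 𝒯 : Sketch.{u}) (C : Type v) [Category.{w} C] (F : 𝒮.S × 𝒯.S ⥤ C) :
    IsModel (𝒮.tensor 𝒯) C F ↔
      ((∀ t : 𝒯.S, IsModel 𝒮 C (Prod.sectL 𝒮.S t ⋙ F)) ∧
       (∀ s : 𝒮.S, IsModel 𝒯 C (Prod.sectR s 𝒯.S ⋙ F))) := by
  constructor
  · intro h
    constructor
    · intro t c hc
      exact h (SketchCone.map c (Prod.sectL 𝒮.S t))
        (Or.inl (Set.mem_iUnion.2 ⟨t, Set.mem_image_of_mem _ hc⟩))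
    · intro s c hc
      exact h (SketchCone.map c (Prod.sectR s 𝒯.S))
        (Or.inr (Set.mem_iUnion.2 ⟨s, Set.mem_image_of_mem _ hc⟩))
  · rintro ⟨h1, h2⟩ c hc
    simp only [Sketch.tensor, Set.mem_union, Set.mem_iUnion, Set.mem_image] at hc
    rcases hc with hc | hc
    · obtain ⟨t, c', hc', rfl⟩ := Set.mem_iUnion.1 hc
      exact h1 t c' hc'
    · obtain ⟨s, c', hc', rfl⟩ := Set.mem_iUnion.1 hc
      exact h2 s c' hc'



section Main

variable (𝒮 𝒯 : Sketch.{u}) (C : Type v) [Category.{w} C]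

/-- The curried functor landing in `ModelsCat 𝒯 C`. -/
def inner : ModelsCat (𝒮.tensor 𝒯) C ⥤ (𝒮.S ⥤ ModelsCat 𝒯 C) where
  obj X := ObjectProperty.lift (IsModel 𝒯 C) (Functor.curry.obj X.obj)
    (fun s => ((part1 𝒮 𝒯 C X.obj).1 X.property).2 s)
  map {X Y} f :=
    { app := fun s => ObjectProperty.homMk ((Functor.curry.map f.hom).app s)
      naturality := fun _ _ g => by ext1; exact (Functor.curry.map f.hom).naturality g }

lemma inner_isModel (X : ModelsCat (𝒮.tensor 𝒯) C) :
    IsModel 𝒮 (ModelsCat 𝒯 C) ((inner 𝒮 𝒯 C).obj X) := by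
  intro c hc
  have amb : IsLimit ((ObjectProperty.ι (IsModel 𝒯 C)).mapCone
      (((inner 𝒮 𝒯 C).obj X).mapCone c.cone)) :=
    evaluationJointlyReflectsLimits _
      (fun t => (((part1 𝒮 𝒯 C X.obj).1 X.property).1 t c hc).some)
  exact ⟨isLimitOfReflects (ObjectProperty.ι (IsModel 𝒯 C)) amb⟩


/-- The forward functor. -/
def Phi : ModelsCat (𝒮.tensor 𝒯) C ⥤ ModelsCat 𝒮 (ModelsCat 𝒯 C) :=
  ObjectProperty.lift _ (inner 𝒮 𝒯 C) (inner_isModel 𝒮 𝒯 C)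

lemma psi_isModel (hS : ∀ c ∈ 𝒮.cones, Limits.HasLimitsOfShape c.J C)
    (hT : ∀ c ∈ 𝒯.cones, Limits.HasLimitsOfShape c.J C)
    (G : ModelsCat 𝒮 (ModelsCat 𝒯 C)) :
    IsModel (𝒮.tensor 𝒯) C ((modForget 𝒮 𝒯 C ⋙ Functor.uncurry).obj G) := by
  set H : 𝒮.S ⥤ 𝒯.S ⥤ C := G.obj ⋙ ObjectProperty.ι (IsModel 𝒯 C) with hH
  refine (part1 𝒮 𝒯 C (Functor.uncurry.obj H)).2 ⟨?_, ?_⟩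
  · intro t
    rw [sectL_uncurry]
    intro c hc
    haveI := hS c hc
    haveI : CreatesLimitsOfShape c.J (ObjectProperty.ι (IsModel 𝒯 C)) :=
      by haveI := closed 𝒯 C c.J; infer_instance
    have := isLimitOfPreserves
      (ObjectProperty.ι (IsModel 𝒯 C) ⋙ (evaluation 𝒯.S C).obj t)
      (G.property c hc).some
    exact ⟨this⟩
  · intro s
    rw [sectR_uncurry]
    exact (G.obj.obj s).property

/-- The backward functor. -/
def Psi (hS : ∀ c ∈ 𝒮.cones, Limits.HasLimitsOfShape c.J C)
    (hT : ∀ c ∈ 𝒯.cones, Limits.HasLimitsOfShape c.J C) :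
    ModelsCat 𝒮 (ModelsCat 𝒯 C) ⥤ ModelsCat (𝒮.tensor 𝒯) C :=
  ObjectProperty.lift _ (modForget 𝒮 𝒯 C ⋙ Functor.uncurry) (psi_isModel 𝒮 𝒯 C hS hT)

end Main

end StmtAux

open StmtAux in
/-- A functor `F : S × T ⥤ C` is a model of the tensor product sketch
`𝒮 ⊠ 𝒯` iff all its partial functors are models, and the currying isomorphism restricts to
an isomorphism of categories `Mod(𝒮 ⊠ 𝒯, C) ≅ Mod(𝒮, Mod(𝒯, C))`. -/
theorem stmt2 (𝒮 𝒯 : Sketch.{u}) (C : Type v) [Category.{w} C]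
    (hS : ∀ c ∈ 𝒮.cones, Limits.HasLimitsOfShape c.J C)
    (hT : ∀ c ∈ 𝒯.cones, Limits.HasLimitsOfShape c.J C) :
    (∀ F : 𝒮.S × 𝒯.S ⥤ C,
      IsModel (𝒮.tensor 𝒯) C F ↔
        ((∀ t : 𝒯.S, IsModel 𝒮 C (Prod.sectL 𝒮.S t ⋙ F)) ∧
         (∀ s : 𝒮.S, IsModel 𝒯 C (Prod.sectR s 𝒯.S ⋙ F)))) ∧
    ∃ (Φ : ModelsCat (𝒮.tensor 𝒯) C ⥤ ModelsCat 𝒮 (ModelsCat 𝒯 C))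
      (Ψ : ModelsCat 𝒮 (ModelsCat 𝒯 C) ⥤ ModelsCat (𝒮.tensor 𝒯) C),
      Φ ⋙ Ψ = 𝟭 (ModelsCat (𝒮.tensor 𝒯) C) ∧
      Ψ ⋙ Φ = 𝟭 (ModelsCat 𝒮 (ModelsCat 𝒯 C)) ∧
      ObjectProperty.ι (IsModel (𝒮.tensor 𝒯) C) ⋙ Functor.curry =
        Φ ⋙ modForget 𝒮 𝒯 C := by
  have h3 : ObjectProperty.ι (IsModel (𝒮.tensor 𝒯) C) ⋙ Functor.curry =
      Phi 𝒮 𝒯 C ⋙ modForget 𝒮 𝒯 C := rfl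
  refine ⟨part1 𝒮 𝒯 C, Phi 𝒮 𝒯 C, Psi 𝒮 𝒯 C hS hT, ?_, ?_, h3⟩
  · apply liftExt
    show (Phi 𝒮 𝒯 C ⋙ modForget 𝒮 𝒯 C) ⋙ Functor.uncurry =
      𝟭 _ ⋙ ObjectProperty.ι (IsModel (𝒮.tensor 𝒯) C)
    rw [← h3]
    exact congrArg (fun K => ObjectProperty.ι (IsModel (𝒮.tensor 𝒯) C) ⋙ K) (curry_comp_uncurry 𝒮.S 𝒯.S C)
  · apply liftExt
    apply cancel_right
      (K := (Functor.whiskeringRight 𝒮.S (ModelsCat 𝒯 C) (𝒯.S ⥤ C)).obj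
        (ObjectProperty.ι (IsModel 𝒯 C)))
      (fun _ _ hh => liftExt hh)
    show Psi 𝒮 𝒯 C hS hT ⋙ (Phi 𝒮 𝒯 C ⋙ modForget 𝒮 𝒯 C) = modForget 𝒮 𝒯 C
    rw [← h3]
    show (modForget 𝒮 𝒯 C ⋙ Functor.uncurry) ⋙ Functor.curry = modForget 𝒮 𝒯 C
    rw [Functor.assoc, uncurry_comp_curry]; rfl
end

section
/- The category Sk of small limit sketches and sketch morphisms carries a monoidal structure whose tensor is 𝒮 ⊠ 𝒯 and whose unit is the sketch on the terminal category (one object, only the identity morphism) with no designated cones; moreover this monoidal structure is closed, with internal hom ModSk: there are bijections, natural in all variables, between sketch morphisms 𝒮 ⊠ 𝒯 → 𝒞 and sketch morphisms 𝒮 → ModSk(𝒯, 𝒞), and between sketch morphisms 𝒮 ⊠ 𝒯 → 𝒞 and sketch morphisms 𝒯 → ModSk(𝒮, 𝒞). -/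
open CategoryTheory CategoryTheory.Limits

universe u

/-- A morphism of limit sketches: a functor carrying designated cones to designated cones. -/
structure SketchHom (𝒮 𝒯 : Sketch.{u}) where
  F : 𝒮.S ⥤ 𝒯.S
  maps_cones : ∀ c ∈ 𝒮.cones, c.map F ∈ 𝒯.cones

theorem SketchHom.ext' {𝒮 𝒯 : Sketch.{u}} {f g : SketchHom 𝒮 𝒯} (h : f.F = g.F) : f = g := by
  cases f; cases g; cases h; rfl

/-- The category `Sk` of small limit sketches and sketch morphisms. -/
instance : Category Sketch.{u} where
  Hom := SketchHom
  id 𝒮 := ⟨𝟭 𝒮.S, fun _ hc => hc⟩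
  comp f g := ⟨f.F ⋙ g.F, fun _ hc => g.maps_cones _ (f.maps_cones _ hc)⟩
  id_comp f := by apply SketchHom.ext'; exact Functor.id_comp _
  comp_id f := by apply SketchHom.ext'; exact Functor.comp_id _
  assoc f g h := by apply SketchHom.ext'; exact Functor.assoc _ _ _

/-- The unit sketch: the terminal category (a single object with only its identity) with no
designated cones. -/
def unitSketch : Sketch.{u} where
  S := Discrete PUnit.{u + 1}
  cones := ∅

/-- Models of a sketch in a sketch, i.e. sketch morphisms. -/
def IsSketchModel (𝒯 𝒞 : Sketch.{u}) (F : 𝒯.S ⥤ 𝒞.S) : Prop :=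
  ∀ c ∈ 𝒯.cones, c.map F ∈ 𝒞.cones

/-- The underlying category of the sketch of models. -/
abbrev ModSkCat (𝒯 𝒞 : Sketch.{u}) := ObjectProperty.FullSubcategory (IsSketchModel 𝒯 𝒞)

/-- Evaluation of models at an object `t`. -/
def evalSk (𝒯 𝒞 : Sketch.{u}) (t : 𝒯.S) : ModSkCat 𝒯 𝒞 ⥤ 𝒞.S :=
  ObjectProperty.ι (IsSketchModel 𝒯 𝒞) ⋙ (evaluation 𝒯.S 𝒞.S).obj t

/-- The sketch of models `ModSk(𝒯, 𝒞)`: the full subcategory of the functor category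
spanned by sketch morphisms `𝒯 → 𝒞`, with designated cones exactly those whose composite
with each evaluation functor is a designated cone of `𝒞`. -/
def ModSk (𝒯 𝒞 : Sketch.{u}) : Sketch.{u} where
  S := ModSkCat 𝒯 𝒞
  cones := { c | ∀ t : 𝒯.S, c.map (evalSk 𝒯 𝒞 t) ∈ 𝒞.cones }

/-- Functoriality of the sketch of models on underlying categories: precompose with `b` and
postcompose with `k`. -/
def ModSk.mapFunctor {𝒯' 𝒯 𝒞 𝒞' : Sketch.{u}} (b : 𝒯' ⟶ 𝒯) (k : 𝒞 ⟶ 𝒞') :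
    (ModSk 𝒯 𝒞).S ⥤ (ModSk 𝒯' 𝒞').S :=
  ObjectProperty.lift (IsSketchModel 𝒯' 𝒞')
    (ObjectProperty.ι (IsSketchModel 𝒯 𝒞) ⋙
      (Functor.whiskeringLeft 𝒯'.S 𝒯.S 𝒞.S).obj b.F ⋙ (Functor.whiskeringRight 𝒯'.S 𝒞.S 𝒞'.S).obj k.F)
    (fun G _ hc => k.maps_cones _ (G.property _ (b.maps_cones _ hc)))

/-- The action of the sketch of models on sketch morphisms (contravariant in the first
variable, covariant in the second), as a sketch morphism. -/
def ModSk.map {𝒯' 𝒯 𝒞 𝒞' : Sketch.{u}} (b : 𝒯' ⟶ 𝒯) (k : 𝒞 ⟶ 𝒞') :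
    ModSk 𝒯 𝒞 ⟶ ModSk 𝒯' 𝒞' where
  F := ModSk.mapFunctor b k
  maps_cones := fun _ hσ t' => k.maps_cones _ (hσ (b.F.obj t'))


section Aux

universe s a b a' b' a'' b''

@[simp] theorem SketchCone.map_map {S : Type a} [Category.{b} S] {C : Type a'} [Category.{b'} C]
    {E : Type a''} [Category.{b''} E] (c : SketchCone.{s} S) (F : S ⥤ C) (G : C ⥤ E) :
    (c.map F).map G = c.map (F ⋙ G) := rfl

@[simp] theorem SketchCone.map_id {S : Type a} [Category.{b} S] (c : SketchCone.{s} S) :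
    c.map (𝟭 S) = c := rfl

theorem SketchCone.map_congr {S : Type a} [Category.{b} S] {C : Type a'} [Category.{b'} C]
    (c : SketchCone.{s} S) {F G : S ⥤ C} (h : F = G) : c.map F = c.map G := by rw [h]

end Aux

namespace Stmt3

theorem sectL_comp_prod {S T S' T' : Type u} [Category.{u} S] [Category.{u} T]
    [Category.{u} S'] [Category.{u} T'] (F : S ⥤ S') (G : T ⥤ T') (t : T) :
    Prod.sectL S t ⋙ F.prod G = F ⋙ Prod.sectL S' (G.obj t) :=
  CategoryTheory.Functor.ext (fun _ => rfl) (fun _ _ _ => by simp [Prod.sectL]; exact ⟨(Category.id_comp _).symm, rfl⟩)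

theorem sectR_comp_prod {S T S' T' : Type u} [Category.{u} S] [Category.{u} T]
    [Category.{u} S'] [Category.{u} T'] (F : S ⥤ S') (G : T ⥤ T') (s : S) :
    Prod.sectR s T ⋙ F.prod G = G ⋙ Prod.sectR (F.obj s) T' :=
  CategoryTheory.Functor.ext (fun _ => rfl) (fun _ _ _ => by simp [Prod.sectR]; exact ⟨rfl, (Category.id_comp _).symm⟩)

variable {𝒮 𝒯 𝒰 𝒞 : Sketch.{u}}

theorem mem_tensor_left {c : SketchCone 𝒮.S} (hc : c ∈ 𝒮.cones) (t : 𝒯.S) :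
    c.map (Prod.sectL 𝒮.S t) ∈ (𝒮.tensor 𝒯).cones :=
  Or.inl (Set.mem_iUnion.2 ⟨t, ⟨c, hc, rfl⟩⟩)

theorem mem_tensor_right {c : SketchCone 𝒯.S} (hc : c ∈ 𝒯.cones) (s : 𝒮.S) :
    c.map (Prod.sectR s 𝒯.S) ∈ (𝒮.tensor 𝒯).cones :=
  Or.inr (Set.mem_iUnion.2 ⟨s, ⟨c, hc, rfl⟩⟩)

theorem tensor_cases {c : SketchCone (𝒮.tensor 𝒯).S} (h : c ∈ (𝒮.tensor 𝒯).cones) :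
    (∃ t : 𝒯.S, ∃ d ∈ 𝒮.cones, c = SketchCone.map d (Prod.sectL 𝒮.S t)) ∨
    (∃ s : 𝒮.S, ∃ d ∈ 𝒯.cones, c = SketchCone.map d (Prod.sectR s 𝒯.S)) := by
  rcases h with h | h
  · obtain ⟨t, ⟨d, hd, rfl⟩⟩ := Set.mem_iUnion.1 h
    exact Or.inl ⟨t, d, hd, rfl⟩
  · obtain ⟨s, ⟨d, hd, rfl⟩⟩ := Set.mem_iUnion.1 h
    exact Or.inr ⟨s, d, hd, rfl⟩

/-- tensor of morphisms -/
def tHom {𝒮' 𝒯' : Sketch.{u}} (f : 𝒮 ⟶ 𝒮') (g : 𝒯 ⟶ 𝒯') : 𝒮.tensor 𝒯 ⟶ 𝒮'.tensor 𝒯' where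
  F := f.F.prod g.F
  maps_cones := by
    intro c hc
    rcases tensor_cases hc with ⟨t, d, hd, rfl⟩ | ⟨s, d, hd, rfl⟩
    · erw [SketchCone.map_map, d.map_congr (sectL_comp_prod f.F g.F t), ← SketchCone.map_map]
      exact mem_tensor_left (f.maps_cones _ hd) _
    · erw [SketchCone.map_map, d.map_congr (sectR_comp_prod f.F g.F s), ← SketchCone.map_map]
      exact mem_tensor_right (g.maps_cones _ hd) _

def assocHom : (𝒮.tensor 𝒯).tensor 𝒰 ⟶ 𝒮.tensor (𝒯.tensor 𝒰) where
  F := prod.associator _ _ _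
  maps_cones := by
    intro c hc
    rcases tensor_cases hc with ⟨v, d, hd, rfl⟩ | ⟨p, d, hd, rfl⟩
    · rcases tensor_cases hd with ⟨t, e, he, rfl⟩ | ⟨s, e, he, rfl⟩
      · exact mem_tensor_left (𝒯 := 𝒯.tensor 𝒰) he (t, v)
      · exact mem_tensor_right (𝒮 := 𝒮) (mem_tensor_left (𝒯 := 𝒰) he v) s
    · exact mem_tensor_right (𝒮 := 𝒮) (mem_tensor_right (𝒮 := 𝒯) hd p.2) p.1

def assocInv : 𝒮.tensor (𝒯.tensor 𝒰) ⟶ (𝒮.tensor 𝒯).tensor 𝒰 where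
  F := prod.inverseAssociator _ _ _
  maps_cones := by
    intro c hc
    rcases tensor_cases hc with ⟨p, d, hd, rfl⟩ | ⟨s, d, hd, rfl⟩
    · exact mem_tensor_left (𝒯 := 𝒰) (mem_tensor_left (𝒯 := 𝒯) hd p.1) p.2
    · rcases tensor_cases hd with ⟨v, e, he, rfl⟩ | ⟨t, e, he, rfl⟩
      · exact mem_tensor_left (𝒯 := 𝒰) (mem_tensor_right (𝒮 := 𝒮) he s) v
      · exact mem_tensor_right (𝒮 := 𝒮.tensor 𝒯) he (s, t)

def lUnitHom : unitSketch.tensor 𝒮 ⟶ 𝒮 where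
  F := CategoryTheory.Prod.snd _ _
  maps_cones := by
    intro c hc
    rcases tensor_cases hc with ⟨t, d, hd, rfl⟩ | ⟨s, d, hd, rfl⟩
    · exact absurd hd (Set.notMem_empty _)
    · exact hd

def lUnitInv : 𝒮 ⟶ unitSketch.tensor 𝒮 where
  F := Prod.sectR ⟨PUnit.unit⟩ _
  maps_cones := fun _ hc => mem_tensor_right hc _

def rUnitHom : 𝒮.tensor unitSketch ⟶ 𝒮 where
  F := CategoryTheory.Prod.fst _ _
  maps_cones := by
    intro c hc
    rcases tensor_cases hc with ⟨t, d, hd, rfl⟩ | ⟨s, d, hd, rfl⟩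
    · exact hd
    · exact absurd hd (Set.notMem_empty _)

def rUnitInv : 𝒮 ⟶ 𝒮.tensor unitSketch where
  F := Prod.sectL _ ⟨PUnit.unit⟩
  maps_cones := fun _ hc => mem_tensor_left hc _

instance monStruct : MonoidalCategoryStruct Sketch.{u} where
  tensorObj := Sketch.tensor
  tensorHom := tHom
  whiskerLeft X _ _ f := tHom (𝟙 X) f
  whiskerRight f X := tHom f (𝟙 X)
  tensorUnit := unitSketch
  associator 𝒮 𝒯 𝒰 := ⟨assocHom, assocInv, SketchHom.ext' rfl, SketchHom.ext' rfl⟩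
  leftUnitor 𝒮 := ⟨lUnitHom, lUnitInv, SketchHom.ext' rfl, SketchHom.ext' rfl⟩
  rightUnitor 𝒮 := ⟨rUnitHom, rUnitInv, SketchHom.ext' rfl, SketchHom.ext' rfl⟩

def monCat : MonoidalCategory Sketch.{u} :=
  MonoidalCategory.ofTensorHom
    (id_tensorHom_id := fun _ _ => SketchHom.ext' rfl)
    (id_tensorHom := by intros; exact SketchHom.ext' rfl)
    (tensorHom_id := by intros; exact SketchHom.ext' rfl)
    (tensorHom_comp_tensorHom := by intros; exact SketchHom.ext' rfl)
    (associator_naturality := by intros; exact SketchHom.ext' rfl)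
    (leftUnitor_naturality := by intros; exact SketchHom.ext' rfl)
    (rightUnitor_naturality := by intros; exact SketchHom.ext' rfl)
    (pentagon := fun _ _ _ _ => SketchHom.ext' rfl)
    (triangle := fun _ _ => SketchHom.ext' rfl)

variable {𝒮 𝒯 𝒞 : Sketch.{u}}

theorem fullSubObj_ext {C : Type*} [Category C] {P : C → Prop} {X Y : ObjectProperty.FullSubcategory P}
    (h : X.obj = Y.obj) : X = Y := by
  cases X; cases Y; cases h; rfl

theorem sectL_comp_uncurry {A B C : Type*} [Category A] [Category B] [Category C]
    (H : A ⥤ B ⥤ C) (t : B) :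
    Prod.sectL A t ⋙ Functor.uncurry.obj H = H ⋙ (evaluation B C).obj t :=
  CategoryTheory.Functor.ext (fun _ => rfl) (fun _ _ _ => by simp [Prod.sectL]; exact (Category.id_comp _).symm)

theorem sectR_comp_uncurry {A B C : Type*} [Category A] [Category B] [Category C]
    (H : A ⥤ B ⥤ C) (s : A) :
    Prod.sectR s B ⋙ Functor.uncurry.obj H = H.obj s :=
  CategoryTheory.Functor.ext (fun _ => rfl) (fun _ _ _ => by simp [Prod.sectR]; exact (Category.id_comp _).symm)

theorem fullSub_functor_ext {A : Type*} [Category A] {C : Type*} [Category C] {P : C → Prop}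
    {F G : A ⥤ ObjectProperty.FullSubcategory P}
    (h : F ⋙ ObjectProperty.ι P = G ⋙ ObjectProperty.ι P) : F = G := by
  have hobj : ∀ X, F.obj X = G.obj X := fun X => fullSubObj_ext (Functor.congr_obj h X)
  refine CategoryTheory.Functor.ext hobj (fun X Y f => ?_)
  apply (ObjectProperty.ι P).map_injective
  have := Functor.congr_hom h f
  simp only [Functor.map_comp, eqToHom_map]
  exact this

/-- the currying bijection -/
def eLfun (f : 𝒮.tensor 𝒯 ⟶ 𝒞) : 𝒮 ⟶ ModSk 𝒯 𝒞 where
  F := ObjectProperty.lift _ (Functor.curry.obj f.F)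
    (fun s c hc => f.maps_cones _ (mem_tensor_right hc s))
  maps_cones := fun c hc t => f.maps_cones _ (mem_tensor_left hc t)

def eLinv (g : 𝒮 ⟶ ModSk 𝒯 𝒞) : 𝒮.tensor 𝒯 ⟶ 𝒞 where
  F := Functor.uncurry.obj (g.F ⋙ ObjectProperty.ι _)
  maps_cones := by
    intro c hc
    rcases tensor_cases hc with ⟨t, d, hd, rfl⟩ | ⟨s, d, hd, rfl⟩
    · erw [SketchCone.map_map, d.map_congr (sectL_comp_uncurry _ t)]
      exact g.maps_cones d hd t
    · erw [SketchCone.map_map, d.map_congr (sectR_comp_uncurry _ s)]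
      exact (g.F.obj s).property d hd

def eLequiv (𝒮 𝒯 𝒞 : Sketch.{u}) : (𝒮.tensor 𝒯 ⟶ 𝒞) ≃ (𝒮 ⟶ ModSk 𝒯 𝒞) where
  toFun := eLfun
  invFun := eLinv
  left_inv f := SketchHom.ext' (Functor.uncurry_obj_curry_obj f.F)
  right_inv g := SketchHom.ext' (fullSub_functor_ext
    (by
      show Functor.curry.obj (Functor.uncurry.obj (g.F ⋙ ObjectProperty.ι _)) =
        g.F ⋙ ObjectProperty.ι _
      exact Functor.curry_obj_uncurry_obj _))

theorem eL_natural {𝒮' 𝒮 𝒯' 𝒯 𝒞 𝒞' : Sketch.{u}} (a : 𝒮' ⟶ 𝒮) (b : 𝒯' ⟶ 𝒯) (k : 𝒞 ⟶ 𝒞')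
    (f : 𝒮.tensor 𝒯 ⟶ 𝒞) :
    eLequiv 𝒮' 𝒯' 𝒞' (tHom a b ≫ f ≫ k) = a ≫ eLequiv 𝒮 𝒯 𝒞 f ≫ ModSk.map b k := by
  apply SketchHom.ext'
  apply fullSub_functor_ext
  show Functor.curry.obj ((a.F.prod b.F) ⋙ f.F ⋙ k.F) =
    a.F ⋙ Functor.curry.obj f.F ⋙ (Functor.whiskeringLeft 𝒯'.S 𝒯.S 𝒞.S).obj b.F ⋙
      (Functor.whiskeringRight 𝒯'.S 𝒞.S 𝒞'.S).obj k.F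
  refine CategoryTheory.Functor.ext (fun s => ?_) (fun X Y m => ?_)
  · exact CategoryTheory.Functor.ext (fun t => rfl) (fun t t' g => by
      simp [Functor.curryObj, Prod.sectL, Prod.sectR]; rfl)
  · ext t
    simp [Functor.curryObj, eqToHom_app, Prod.sectL, Prod.sectR]; rfl

/-- the braiding -/
def braid (𝒮 𝒯 : Sketch.{u}) : 𝒮.tensor 𝒯 ⟶ 𝒯.tensor 𝒮 where
  F := CategoryTheory.Prod.swap _ _
  maps_cones := by
    intro c hc
    rcases tensor_cases hc with ⟨t, d, hd, rfl⟩ | ⟨s, d, hd, rfl⟩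
    · exact mem_tensor_right hd t
    · exact mem_tensor_left hd s

def eRequiv (𝒮 𝒯 𝒞 : Sketch.{u}) : (𝒮.tensor 𝒯 ⟶ 𝒞) ≃ (𝒯 ⟶ ModSk 𝒮 𝒞) :=
  Equiv.trans
    { toFun := fun f => braid 𝒯 𝒮 ≫ f
      invFun := fun f => braid 𝒮 𝒯 ≫ f
      left_inv := fun f => SketchHom.ext' rfl
      right_inv := fun f => SketchHom.ext' rfl }
    (eLequiv 𝒯 𝒮 𝒞)

theorem braid_tHom {𝒮' 𝒯' : Sketch.{u}} (a : 𝒮 ⟶ 𝒮') (b : 𝒯 ⟶ 𝒯') :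
    braid 𝒯 𝒮 ≫ tHom a b = tHom b a ≫ braid 𝒯' 𝒮' := SketchHom.ext' rfl

theorem eR_natural {𝒮' 𝒮 𝒯' 𝒯 𝒞 𝒞' : Sketch.{u}} (a : 𝒮' ⟶ 𝒮) (b : 𝒯' ⟶ 𝒯) (k : 𝒞 ⟶ 𝒞')
    (f : 𝒮.tensor 𝒯 ⟶ 𝒞) :
    eRequiv 𝒮' 𝒯' 𝒞' (tHom a b ≫ f ≫ k) = b ≫ eRequiv 𝒮 𝒯 𝒞 f ≫ ModSk.map a k := by
  show eLequiv 𝒯' 𝒮' 𝒞' (braid 𝒯' 𝒮' ≫ tHom a b ≫ f ≫ k) = _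
  have : braid 𝒯' 𝒮' ≫ tHom a b ≫ f ≫ k = tHom b a ≫ (braid 𝒯 𝒮 ≫ f) ≫ k :=
    SketchHom.ext' rfl
  rw [this, eL_natural]
  rfl


end Stmt3

/-- The category of small limit sketches carries a monoidal structure with
tensor `⊠` and unit the terminal sketch with no designated cones; it is closed with internal
hom `ModSk`, via bijections between sketch morphisms `𝒮 ⊠ 𝒯 → 𝒞` and `𝒮 → ModSk(𝒯, 𝒞)`,
respectively `𝒯 → ModSk(𝒮, 𝒞)`, natural in all variables. -/
theorem stmt3 :
    ∃ M : MonoidalCategory Sketch.{u},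
      (∀ 𝒮 𝒯 : Sketch.{u}, M.tensorObj 𝒮 𝒯 = 𝒮.tensor 𝒯) ∧
      M.tensorUnit = unitSketch.{u} ∧
      ∃ (eL : ∀ 𝒮 𝒯 𝒞 : Sketch.{u}, (M.tensorObj 𝒮 𝒯 ⟶ 𝒞) ≃ (𝒮 ⟶ ModSk 𝒯 𝒞))
        (eR : ∀ 𝒮 𝒯 𝒞 : Sketch.{u}, (M.tensorObj 𝒮 𝒯 ⟶ 𝒞) ≃ (𝒯 ⟶ ModSk 𝒮 𝒞)),
        (∀ (𝒮' 𝒮 𝒯' 𝒯 𝒞 𝒞' : Sketch.{u}) (a : 𝒮' ⟶ 𝒮) (b : 𝒯' ⟶ 𝒯) (k : 𝒞 ⟶ 𝒞')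
          (f : M.tensorObj 𝒮 𝒯 ⟶ 𝒞),
          eL 𝒮' 𝒯' 𝒞' (M.tensorHom a b ≫ f ≫ k) =
            a ≫ eL 𝒮 𝒯 𝒞 f ≫ ModSk.map b k) ∧
        (∀ (𝒮' 𝒮 𝒯' 𝒯 𝒞 𝒞' : Sketch.{u}) (a : 𝒮' ⟶ 𝒮) (b : 𝒯' ⟶ 𝒯) (k : 𝒞 ⟶ 𝒞')
          (f : M.tensorObj 𝒮 𝒯 ⟶ 𝒞),
          eR 𝒮' 𝒯' 𝒞' (M.tensorHom a b ≫ f ≫ k) =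
            b ≫ eR 𝒮 𝒯 𝒞 f ≫ ModSk.map a k) := by
  refine ⟨Stmt3.monCat, fun _ _ => rfl, rfl,
    fun 𝒮 𝒯 𝒞 => Stmt3.eLequiv 𝒮 𝒯 𝒞, fun 𝒮 𝒯 𝒞 => Stmt3.eRequiv 𝒮 𝒯 𝒞, ?_, ?_⟩
  · intro 𝒮' 𝒮 𝒯' 𝒯 𝒞 𝒞' a b k f
    exact Stmt3.eL_natural a b k f
  · intro 𝒮' 𝒮 𝒯' 𝒯 𝒞 𝒞' a b k f
    exact Stmt3.eR_natural a b k f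
end

section
/- Let V and W be monoidal closed categories and F : V ⥤ W a lax monoidal functor. Then the object assignment X ↦ F(X), together with the canonical comparison morphisms m_{X,Y} : F([X, Y]_V) ⟶ [F X, F Y]_W on hom-objects, defines a W-enriched functor from the W-enriched category F₊V (the transport along F of the self-enrichment of V) to the self-enrichment of W; that is, the comparisons m_{X,Y} are compatible with the enriched identity elements and with enriched composition. -/
open CategoryTheory CategoryTheory.MonoidalCategory
open scoped MonoidalClosed

universe v₁ v₂ u₁ u₂

noncomputable section

variable {V : Type u₁} [Category.{v₁} V] [MonoidalCategory V] [MonoidalClosed V]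
  {W : Type u₂} [Category.{v₂} W] [MonoidalCategory W] [MonoidalClosed W]

/-- The canonical comparison morphism `F([X, Y]_V) ⟶ [F X, F Y]_W` of a lax monoidal functor
`F` between monoidal closed categories: the transpose (currying) of the composite
`F X ⊗ F([X, Y]_V) ⟶ F(X ⊗ [X, Y]_V) ⟶ F Y` of the lax monoidal structure morphism `μ`
followed by `F` applied to the evaluation (counit). -/
def laxComparison (F : V ⥤ W) [F.LaxMonoidal] (X Y : V) :
    F.obj ((ihom X).obj Y) ⟶ (ihom (F.obj X)).obj (F.obj Y) :=
  MonoidalClosed.curry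
    (Functor.LaxMonoidal.μ F X ((ihom X).obj Y) ≫ F.map ((ihom.ev X).app Y))

open MonoidalClosed Functor.LaxMonoidal in
/-- For a lax monoidal functor `F : V ⥤ W` between monoidal closed
categories, the object assignment `X ↦ F X` together with the canonical comparison morphisms
`F([X, Y]_V) ⟶ [F X, F Y]_W` defines a `W`-enriched functor from the transported enrichment
`F₊V` of the self-enrichment of `V` to the self-enrichment of `W`; that is, the comparison
morphisms are compatible with the enriched identity elements and with enriched composition
(the two axioms of a `W`-enriched functor, with object map `X ↦ F X`). -/
theorem stmt9 (F : V ⥤ W) [F.LaxMonoidal] :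
    (∀ X : V,
      eId W (C := TransportEnrichment F V) X ≫ laxComparison F X X = eId W (F.obj X)) ∧
    (∀ X Y Z : V,
      eComp W (C := TransportEnrichment F V) X Y Z ≫ laxComparison F X Z =
        (laxComparison F X Y ⊗ₘ laxComparison F Y Z) ≫
          eComp W (F.obj X) (F.obj Y) (F.obj Z)) := by
  have hev : ∀ (X Y : V), F.obj X ◁ laxComparison F X Y ≫ (ihom.ev (F.obj X)).app (F.obj Y)
      = μ F X ((ihom X).obj Y) ≫ F.map ((ihom.ev X).app Y) := by
    intro X Y
    rw [laxComparison, ← uncurry_eq, uncurry_curry]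
  constructor
  · intro X
    show (ε F ≫ F.map (MonoidalClosed.id X)) ≫ laxComparison F X X = MonoidalClosed.id (F.obj X)
    apply uncurry_injective
    rw [uncurry_natural_left, laxComparison, uncurry_curry, MonoidalClosed.id, MonoidalClosed.id]
    rw [MonoidalCategory.whiskerLeft_comp, Category.assoc, μ_natural_right_assoc,
      ← F.map_comp, ← uncurry_eq, uncurry_curry, uncurry_curry]
    exact (right_unitality F X).symm
  · intro X Y Z
    show (μ F _ _ ≫ F.map (MonoidalClosed.comp X Y Z)) ≫ laxComparison F X Z =
      (laxComparison F X Y ⊗ₘ laxComparison F Y Z) ≫ MonoidalClosed.comp _ _ _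
    apply uncurry_injective
    rw [uncurry_natural_left, uncurry_natural_left, laxComparison, uncurry_curry,
      MonoidalClosed.comp, MonoidalClosed.comp, uncurry_curry]
    rw [MonoidalCategory.whiskerLeft_comp, Category.assoc, μ_natural_right_assoc,
      ← F.map_comp]
    conv_lhs => rw [show X ◁ curry (compTranspose X Y Z) ≫ (ihom.ev X).app Z
      = compTranspose X Y Z from by rw [← uncurry_eq, uncurry_curry]]
    rw [compTranspose, compTranspose]
    rw [F.map_comp, F.map_comp, associativity_inv_assoc, ← μ_natural_left_assoc]
    rw [MonoidalCategory.tensorHom_def, MonoidalCategory.whiskerLeft_comp, Category.assoc,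
      associator_inv_naturality_right_assoc, whisker_exchange_assoc,
      associator_inv_naturality_middle_assoc, ← comp_whiskerRight_assoc]
    simp only [Functor.id_obj]
    rw [← comp_whiskerRight_assoc, hev, hev]

end
end
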